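/- Let F, F̂ : ℝ^k → {±1}, let R ≥ 1, ρ ∈ (0,1), β ∈ (0,1), and suppose F is (R,ρ)-locally β-balanced, i.e., for every x with ‖x‖₂ ≤ R and every ρ' ≤ ρ, P_{z∼N(0,I_k)}[F(z)=F(x) | z ∈ B(x,ρ')] > β. Suppose P_{z∼N(0,I_k)}[F(z) ≠ F̂(z)] ≤ γ where γ = β · inf_{‖x‖₂≤R} P_{z∼N(0,I_k)}[z ∈ B(x,ρ)]. Then for every x with ‖x‖₂ ≤ R and F(x) ≠ F̂(x), the point x lies in the ρ-boundary of F̂, i.e., there exists z with ‖z‖₂ ≤ ρ and F̂(x+z) ≠ F̂(x). -/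

import Mathlib

open MeasureTheory

/-- The standard Gaussian measure `N(0, I_k)` on `ℝ^k`. -/
noncomputable def stdGaussian (k : ℕ) : Measure (EuclideanSpace ℝ (Fin k)) :=
  (Measure.pi fun _ : Fin k => ProbabilityTheory.gaussianReal 0 1).map
    (MeasurableEquiv.toLp 2 (Fin k → ℝ))

instance stdGaussian_prob (k : ℕ) : IsProbabilityMeasure (stdGaussian k) := by
  unfold stdGaussian
  exact Measure.isProbabilityMeasure_map (Measurable.aemeasurable (MeasurableEquiv.measurable _))

theorem stmt10 (k : ℕ) (F Fhat : EuclideanSpace ℝ (Fin k) → ℝ)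
    (R ρ β : ℝ) (hR : 1 ≤ R) (hρ : ρ ∈ Set.Ioo (0 : ℝ) 1) (hβ : β ∈ Set.Ioo (0 : ℝ) 1)
    -- `F` is `(R, ρ)`-locally `β`-balanced
    (hbal : ∀ x : EuclideanSpace ℝ (Fin k), ‖x‖ ≤ R → ∀ ρ', 0 < ρ' → ρ' ≤ ρ →
      β < ((stdGaussian k) (Metric.closedBall x ρ' ∩ {z | F z = F x})).toReal
            / ((stdGaussian k) (Metric.closedBall x ρ')).toReal)
    -- the disagreement between `F` and `Fhat` is at most `γ`
    (hdis : ((stdGaussian k) {z | F z ≠ Fhat z}).toReal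
      ≤ β * ⨅ x : {x : EuclideanSpace ℝ (Fin k) // ‖x‖ ≤ R},
          ((stdGaussian k) (Metric.closedBall (x : EuclideanSpace ℝ (Fin k)) ρ)).toReal) :
    ∀ x : EuclideanSpace ℝ (Fin k), ‖x‖ ≤ R → F x ≠ Fhat x →
      ∃ z : EuclideanSpace ℝ (Fin k), ‖z‖ ≤ ρ ∧ Fhat (x + z) ≠ Fhat x := by
  intro x hx hFx
  by_contra hno
  push_neg at hno
  set μ := stdGaussian k
  have hball := hbal x hx ρ hρ.1 le_rfl
  set a := (μ (Metric.closedBall x ρ ∩ {z | F z = F x})).toReal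
  set b := (μ (Metric.closedBall x ρ)).toReal
  have hb0 : 0 < b := by
    by_contra h
    push_neg at h
    have : b = 0 := le_antisymm h ENNReal.toReal_nonneg
    rw [this, div_zero] at hball
    linarith [hβ.1]
  have h1 : β * b < a := (lt_div_iff₀ hb0).mp hball
  -- the balanced set is contained in the disagreement set
  have hsub : Metric.closedBall x ρ ∩ {z | F z = F x} ⊆ {z | F z ≠ Fhat z} := by
    rintro z ⟨hz1, hz2⟩
    have hz : ‖z - x‖ ≤ ρ := by
      rw [Metric.mem_closedBall, dist_eq_norm] at hz1
      exact hz1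
    have hFhz : Fhat z = Fhat x := by
      have := hno (z - x) hz
      simpa using this
    simp only [Set.mem_setOf_eq] at hz2 ⊢
    rw [hz2, hFhz]
    exact hFx
  have h2 : a ≤ (μ {z | F z ≠ Fhat z}).toReal := by
    apply ENNReal.toReal_mono (measure_ne_top μ _) (measure_mono hsub)
  -- the infimum is at most b
  have h3 : (⨅ y : {x : EuclideanSpace ℝ (Fin k) // ‖x‖ ≤ R},
      (μ (Metric.closedBall (y : EuclideanSpace ℝ (Fin k)) ρ)).toReal) ≤ b :=
    ciInf_le ⟨0, fun r ⟨_, hr⟩ => hr ▸ ENNReal.toReal_nonneg⟩ (⟨x, hx⟩ : {x // ‖x‖ ≤ R})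
  have h4 : β * (⨅ y : {x : EuclideanSpace ℝ (Fin k) // ‖x‖ ≤ R},
      (μ (Metric.closedBall (y : EuclideanSpace ℝ (Fin k)) ρ)).toReal) ≤ β * b :=
    mul_le_mul_of_nonneg_left h3 hβ.1.le
  linarith
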